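/- Let y ≥ 2, α > 0 and t be real, s = α + it. Then |ζ(s,y)/ζ(α,y)| = ∏_{p ≤ y, p prime} ( 1 + 2(1 − cos(t·log p))/( p^α·(1 − p^{−α})² ) )^{−1/2}, and this quantity is at most exp( −∑_{p ≤ y, p prime} (1 − cos(t·log p))/p^α ). -/

import Mathlib

/-- `ζ(s,y) = ∏_{p ≤ y, p prime} (1 - p^{-s})⁻¹` for complex `s`. -/
noncomputable def zetaC (s : ℂ) (y : ℝ) : ℂ :=
  ∏ p ∈ (Finset.range (⌊y⌋₊ + 1)).filter Nat.Prime, (1 - (p : ℂ) ^ (-s))⁻¹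

lemma key1 (x : ℝ) (hx0 : 0 ≤ x) : (1 - x) * Real.exp (2 * x) ≤ 1 + x := by
  have hf : ∀ z : ℝ, HasDerivAt (fun w => (1 + w) * Real.exp (-w) - (1 - w) * Real.exp w)
      (z * (Real.exp z - Real.exp (-z))) z := by
    intro z
    have h1 : HasDerivAt (fun w : ℝ => (1 + w) * Real.exp (-w))
        (1 * Real.exp (-z) + (1 + z) * (-Real.exp (-z))) z := by
      have := ((hasDerivAt_id z).const_add 1).mul ((hasDerivAt_id z).neg.exp)
      exact this.congr_deriv (by simp)
    have h2 : HasDerivAt (fun w : ℝ => (1 - w) * Real.exp w)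
        ((-1) * Real.exp z + (1 - z) * Real.exp z) z := by
      have := ((hasDerivAt_id z).const_sub 1).mul (Real.hasDerivAt_exp z)
      exact this.congr_deriv (by simp)
    have := h1.sub h2
    exact this.congr_deriv (by ring)
  have hmono : MonotoneOn (fun w => (1 + w) * Real.exp (-w) - (1 - w) * Real.exp w)
      (Set.Ici (0:ℝ)) := by
    apply monotoneOn_of_deriv_nonneg (convex_Ici 0)
    · exact Continuous.continuousOn (by continuity)
    · intro z hz
      exact (hf z).differentiableAt.differentiableWithinAt
    · intro z hz
      rw [(hf z).deriv]
      have hz0 : 0 < z := by simpa using hz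
      have : Real.exp (-z) ≤ Real.exp z := Real.exp_le_exp.2 (by linarith)
      nlinarith
  have h0 : (0:ℝ) ∈ Set.Ici (0:ℝ) := Set.mem_Ici.2 le_rfl
  have hm := hmono h0 (Set.mem_Ici.2 hx0) hx0
  simp only [neg_zero, Real.exp_zero] at hm
  have hpos := Real.exp_pos x
  have hpos' := Real.exp_pos (-x)
  have hexp : Real.exp x * Real.exp x = Real.exp (2 * x) := by
    rw [← Real.exp_add]; ring_nf
  have hinv : Real.exp (-x) * Real.exp x = 1 := by
    rw [← Real.exp_add]; simp
  nlinarith [mul_le_mul_of_nonneg_right hm hpos.le]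

lemma core (c x : ℝ) (hc0 : 0 ≤ c) (hc2 : c ≤ 2) (hx0 : 0 ≤ x) (hx1 : x < 1) :
    Real.exp (2 * (c * x)) ≤ 1 + 2 * (c * x) / (1 - x) ^ 2 := by
  have hx1'' : (0:ℝ) < 1 - x := by linarith
  have hx1' : (0:ℝ) < (1 - x) ^ 2 := by positivity
  have hconv : Real.exp ((1 - c/2) * 0 + (c/2) * (4*x)) ≤
      (1 - c/2) * Real.exp 0 + (c/2) * Real.exp (4*x) := by
    simpa [smul_eq_mul] using convexOn_exp.2 (Set.mem_univ (0:ℝ)) (Set.mem_univ (4*x))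
      (by linarith : (0:ℝ) ≤ 1 - c/2) (by linarith : (0:ℝ) ≤ c/2) (by ring)
  have e : (1 - c/2) * 0 + (c/2) * (4*x) = 2 * (c * x) := by ring
  rw [e, Real.exp_zero] at hconv
  have key : (1 - x)^2 * Real.exp (4 * x) ≤ (1 + x)^2 := by
    have h := key1 x hx0
    have h2 : Real.exp (4*x) = Real.exp (2*x) * Real.exp (2*x) := by
      rw [← Real.exp_add]; ring_nf
    have ha : (0:ℝ) ≤ (1 - x) * Real.exp (2*x) := by positivity
    have := mul_le_mul h h ha (by linarith : (0:ℝ) ≤ 1 + x)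
    nlinarith [this]
  have hR : 1 + 2*(c*x)/(1-x)^2 = ((1-x)^2 + 2*(c*x))/(1-x)^2 := by field_simp
  rw [hR, le_div_iff₀ hx1']
  nlinarith [mul_le_mul_of_nonneg_left key (by linarith : (0:ℝ) ≤ c/2),
    mul_le_mul_of_nonneg_right hconv hx1'.le]

lemma zrep (p : ℕ) (hp : 2 ≤ p) (α t : ℝ) :
    (p:ℂ) ^ (-((α:ℂ) + (t:ℂ) * Complex.I)) =
      (((p:ℝ)^(-α) : ℝ) : ℂ) * Complex.exp (((-(t * Real.log p) : ℝ) : ℂ) * Complex.I) := by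
  have hp0 : (0:ℝ) < (p:ℝ) := by positivity
  have hpne : (p:ℂ) ≠ 0 := by exact_mod_cast Nat.cast_ne_zero.2 (by omega)
  rw [Complex.cpow_def_of_ne_zero hpne]
  have hlog : Complex.log ((p:ℕ):ℂ) = ((Real.log p : ℝ) : ℂ) := by
    rw [← Complex.ofReal_natCast, ← Complex.ofReal_log hp0.le]
  rw [hlog]
  have : ((Real.log p : ℝ) : ℂ) * (-((α:ℂ) + (t:ℂ) * Complex.I)) =
      ((-(α * Real.log p) : ℝ) : ℂ) + ((-(t * Real.log p) : ℝ) : ℂ) * Complex.I := by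
    push_cast; ring
  rw [this, Complex.exp_add, ← Complex.ofReal_exp]
  congr 2
  rw [Real.rpow_def_of_pos hp0]
  ring_nf

lemma abs1 (p : ℕ) (hp : 2 ≤ p) (α t : ℝ) :
    ‖1 - (p:ℂ) ^ (-((α:ℂ) + (t:ℂ) * Complex.I))‖ =
      Real.sqrt ((1 - (p:ℝ)^(-α))^2 +
        2 * ((p:ℝ)^(-α)) * (1 - Real.cos (t * Real.log p))) := by
  set x := (p:ℝ)^(-α) with hx
  set θ := t * Real.log p with hθ
  rw [zrep p hp α t]
  rw [Complex.norm_def, Complex.normSq_apply]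
  have hre : (1 - (x:ℂ) * Complex.exp (((-θ : ℝ):ℂ) * Complex.I)).re
      = 1 - x * Real.cos θ := by
    simp [Complex.exp_re, Complex.exp_im, Real.cos_neg]
  have him : (1 - (x:ℂ) * Complex.exp (((-θ : ℝ):ℂ) * Complex.I)).im
      = x * Real.sin θ := by
    simp [Complex.exp_re, Complex.exp_im, Real.sin_neg]
  rw [hre, him]
  congr 1
  have h := Real.sin_sq_add_cos_sq θ
  linear_combination (x^2) * h

lemma abs2 (p : ℕ) (hp : 2 ≤ p) {α : ℝ} (hα : 0 < α) :
    ‖1 - (p:ℂ) ^ (-(α:ℂ))‖ = 1 - (p:ℝ)^(-α) := by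
  have hp1 : (1:ℝ) < (p:ℝ) := by exact_mod_cast hp.trans_lt' one_lt_two
  have hxlt : (p:ℝ)^(-α) < 1 := Real.rpow_lt_one_of_one_lt_of_neg hp1 (by linarith)
  have : (p:ℂ) ^ (-(α:ℂ)) = (((p:ℝ)^(-α) : ℝ) : ℂ) := by
    rw [Complex.ofReal_cpow (by positivity : (0:ℝ) ≤ (p:ℝ))]
    push_cast
    ring_nf
  rw [this, ← Complex.ofReal_one, ← Complex.ofReal_sub, Complex.norm_real, Real.norm_eq_abs,
    abs_of_nonneg (by linarith)]

lemma xfacts (p : ℕ) (hp : 2 ≤ p) {α : ℝ} (hα : 0 < α) :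
    0 < (p:ℝ)^(-α) ∧ (p:ℝ)^(-α) < 1 ∧ (p:ℝ)^α = ((p:ℝ)^(-α))⁻¹ := by
  have hp0 : (0:ℝ) < (p:ℝ) := by positivity
  have hp1 : (1:ℝ) < (p:ℝ) := by exact_mod_cast hp.trans_lt' one_lt_two
  refine ⟨Real.rpow_pos_of_pos hp0 _,
    Real.rpow_lt_one_of_one_lt_of_neg hp1 (by linarith), ?_⟩
  rw [Real.rpow_neg hp0.le, inv_inv]

lemma factor_abs (p : ℕ) (hp : 2 ≤ p) {α : ℝ} (hα : 0 < α) (t : ℝ) :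
    ‖(1 - (p:ℂ) ^ (-((α:ℂ) + (t:ℂ) * Complex.I)))⁻¹ /
        (1 - (p:ℂ) ^ (-(α:ℂ)))⁻¹‖ =
      (1 + 2 * (1 - Real.cos (t * Real.log p)) /
          ((p : ℝ) ^ α * (1 - (p : ℝ) ^ (-α)) ^ 2)) ^ (-(1 : ℝ) / 2) := by
  obtain ⟨hx0, hx1, hpα⟩ := xfacts p hp hα
  set x := (p:ℝ)^(-α) with hx
  set c := 1 - Real.cos (t * Real.log p) with hc
  have hc0 : 0 ≤ c := by have := Real.cos_le_one (t * Real.log p); linarith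
  have hA : 0 < (1 - x)^2 + 2 * x * c := by nlinarith
  have h1x : (0:ℝ) < 1 - x := by linarith
  rw [norm_div, norm_inv, norm_inv, abs1 p hp α t, abs2 p hp hα]
  rw [← hx, ← hc]
  have hB : 1 + 2 * c / ((p:ℝ)^α * (1 - x)^2)
      = ((1 - x)^2 + 2 * x * c) / (1 - x)^2 := by
    rw [hpα]
    field_simp
  rw [hB, neg_div, Real.rpow_neg (by positivity), ← Real.sqrt_eq_rpow,
    Real.sqrt_div hA.le, Real.sqrt_sq h1x.le]
  rw [inv_div, inv_div_inv]


lemma factor_le (p : ℕ) (hp : 2 ≤ p) {α : ℝ} (hα : 0 < α) (t : ℝ) :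
    (1 + 2 * (1 - Real.cos (t * Real.log p)) /
        ((p : ℝ) ^ α * (1 - (p : ℝ) ^ (-α)) ^ 2)) ^ (-(1 : ℝ) / 2) ≤
      Real.exp (-((1 - Real.cos (t * Real.log p)) / (p : ℝ) ^ α)) := by
  obtain ⟨hx0, hx1, hpα⟩ := xfacts p hp hα
  set x := (p:ℝ)^(-α) with hx
  set c := 1 - Real.cos (t * Real.log p) with hc
  have hc0 : 0 ≤ c := by have := Real.cos_le_one (t * Real.log p); linarith
  have hc2 : c ≤ 2 := by have := Real.neg_one_le_cos (t * Real.log p); linarith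
  have hB : 1 + 2 * c / ((p:ℝ)^α * (1 - x)^2) = 1 + 2 * (c * x) / (1 - x)^2 := by
    rw [hpα]
    have h1x : (1 - x) ≠ 0 := by intro h; nlinarith
    field_simp
  have hv : c / (p:ℝ)^α = c * x := by rw [hpα, div_inv_eq_mul]
  rw [hB, hv]
  have hcore := core c x hc0 hc2 hx0.le hx1
  have h := Real.rpow_le_rpow_of_nonpos (Real.exp_pos _) hcore (by norm_num : (-(1:ℝ)/2) ≤ 0)
  refine h.trans_eq ?_
  rw [← Real.exp_mul]
  congr 1
  ring

lemma base_nonneg (p : ℕ) (hp : 2 ≤ p) (α t : ℝ) :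
    0 ≤ 1 + 2 * (1 - Real.cos (t * Real.log p)) /
        ((p : ℝ) ^ α * (1 - (p : ℝ) ^ (-α)) ^ 2) := by
  have hc0 : 0 ≤ 1 - Real.cos (t * Real.log p) := by
    have := Real.cos_le_one (t * Real.log p); linarith
  have hd : (0:ℝ) ≤ (p : ℝ) ^ α * (1 - (p : ℝ) ^ (-α)) ^ 2 := by positivity
  have := div_nonneg (by linarith : (0:ℝ) ≤ 2 * (1 - Real.cos (t * Real.log p))) hd
  linarith

theorem stmt_7 (y α t : ℝ) (hy : 2 ≤ y) (hα : 0 < α) :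
    ‖zetaC ((α : ℂ) + (t : ℂ) * Complex.I) y / zetaC (α : ℂ) y‖ =
        ∏ p ∈ (Finset.range (⌊y⌋₊ + 1)).filter Nat.Prime,
          (1 + 2 * (1 - Real.cos (t * Real.log p)) /
              ((p : ℝ) ^ α * (1 - (p : ℝ) ^ (-α)) ^ 2)) ^ (-(1 : ℝ) / 2) ∧
      (∏ p ∈ (Finset.range (⌊y⌋₊ + 1)).filter Nat.Prime,
          (1 + 2 * (1 - Real.cos (t * Real.log p)) /
              ((p : ℝ) ^ α * (1 - (p : ℝ) ^ (-α)) ^ 2)) ^ (-(1 : ℝ) / 2))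
        ≤ Real.exp (-∑ p ∈ (Finset.range (⌊y⌋₊ + 1)).filter Nat.Prime,
            (1 - Real.cos (t * Real.log p)) / (p : ℝ) ^ α) := by
  constructor
  · rw [zetaC, zetaC, ← Finset.prod_div_distrib, norm_prod]
    refine Finset.prod_congr rfl fun p hps => ?_
    exact factor_abs p (Finset.mem_filter.1 hps).2.two_le hα t
  · have hsum : (-∑ p ∈ (Finset.range (⌊y⌋₊ + 1)).filter Nat.Prime,
        (1 - Real.cos (t * Real.log p)) / (p : ℝ) ^ α)
        = ∑ p ∈ (Finset.range (⌊y⌋₊ + 1)).filter Nat.Prime,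
          (-((1 - Real.cos (t * Real.log p)) / (p : ℝ) ^ α)) := by
      rw [← Finset.sum_neg_distrib]
    rw [hsum, Real.exp_sum]
    refine Finset.prod_le_prod (fun p hps => ?_) (fun p hps => ?_)
    · exact Real.rpow_nonneg (base_nonneg p (Finset.mem_filter.1 hps).2.two_le α t) _
    · exact factor_le p (Finset.mem_filter.1 hps).2.two_le hα t
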